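/- Let ρ₁₂ be a density matrix on ℂ^{d₁} ⊗ ℂ^{d₂}, realized as a positive semidefinite trace-one matrix indexed by (Fin d₁ × Fin d₂), and let ρ₁ and ρ₂ be its partial traces: ρ₁(i, i′) = Σ_k ρ₁₂((i,k),(i′,k)) and ρ₂(k, k′) = Σ_i ρ₁₂((i,k),(i,k′)). If ρ₁ is a pure state, i.e., ρ₁ is a rank-one orthogonal projection, then ρ₁₂ factorizes: ρ₁₂ = ρ₁ ⊗ ρ₂ (Kronecker product). -/

import Mathlib

open Kronecker
open scoped ComplexOrder

open Matrix

lemma rank_one_minor {d : ℕ} (A : Matrix (Fin d) (Fin d) ℂ) (h : A.rank = 1)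
    (i j k l : Fin d) : A i j * A k l = A i l * A k j := by
  rw [Matrix.rank] at h
  obtain ⟨v, -, hw⟩ := finrank_eq_one_iff'.mp h
  have hcol : ∀ j : Fin d, ∃ c : ℂ, ∀ i, A i j = c * (v : Fin d → ℂ) i := by
    intro j
    obtain ⟨c, hc⟩ := hw ⟨A.mulVec (Pi.single j 1), LinearMap.mem_range_self _ _⟩
    refine ⟨c, fun i => ?_⟩
    have h2 := congrArg (fun w : LinearMap.range A.mulVecLin => (w : Fin d → ℂ) i) hc
    simpa [Matrix.mulVec_single, eq_comm, mul_comm] using h2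
  obtain ⟨cj, hj⟩ := hcol j
  obtain ⟨cl, hl⟩ := hcol l
  rw [hj i, hl k, hl i, hj k]; ring

lemma eq_zero_of_trace_CT_mul_self {m n : Type*} [Fintype m] [Fintype n] (A : Matrix m n ℂ)
    (h : (Aᴴ * A).trace = 0) : A = 0 := by
  have h1 : ∑ j, ∑ i, (Complex.normSq (A i j) : ℂ) = 0 := by
    simpa [Matrix.trace, Matrix.diag, Matrix.mul_apply, Matrix.conjTranspose_apply,
      Complex.normSq_eq_conj_mul_self] using h
  have h2 : ∑ j : n, ∑ i : m, Complex.normSq (A i j) = 0 := by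
    have := congrArg Complex.re h1
    simpa [Complex.re_sum] using this
  have h3 := (Finset.sum_eq_zero_iff_of_nonneg (fun j _ =>
    Finset.sum_nonneg fun i _ => Complex.normSq_nonneg _)).mp h2
  ext i j
  have h4 := (Finset.sum_eq_zero_iff_of_nonneg (fun i _ =>
    Complex.normSq_nonneg (A i j))).mp (h3 j (Finset.mem_univ j)) i (Finset.mem_univ i)
  simpa [Complex.normSq_eq_zero] using h4

open scoped MatrixOrder in
lemma psd_trace_zero {m : Type*} [Fintype m] [DecidableEq m] (A : Matrix m m ℂ)
    (h : A.PosSemidef) (ht : A.trace = 0) : A = 0 := by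
  obtain ⟨B, rfl⟩ := CStarAlgebra.nonneg_iff_eq_star_mul_self.mp h.nonneg
  rw [eq_zero_of_trace_CT_mul_self B ht]; simp

open scoped MatrixOrder in
noncomputable def Matrix.PosSemidef.sqrt {n : Type*} [Fintype n] [DecidableEq n]
    {A : Matrix n n ℂ} (_ : A.PosSemidef) : Matrix n n ℂ := CFC.sqrt A

open scoped MatrixOrder in
lemma Matrix.PosSemidef.posSemidef_sqrt {n : Type*} [Fintype n] [DecidableEq n]
    {A : Matrix n n ℂ} (hA : A.PosSemidef) : hA.sqrt.PosSemidef :=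
  (CFC.sqrt_nonneg A).posSemidef

open scoped MatrixOrder in
lemma Matrix.PosSemidef.sqrt_mul_self {n : Type*} [Fintype n] [DecidableEq n]
    {A : Matrix n n ℂ} (hA : A.PosSemidef) : hA.sqrt * hA.sqrt = A :=
  CFC.sqrt_mul_sqrt_self A hA.nonneg

/-- If the first partial trace of a bipartite density matrix is a pure
state (a rank-one orthogonal projection), then the density matrix factorizes as the
Kronecker product of its two partial traces. -/
theorem pure_marginal_factorizes (d₁ d₂ : ℕ)
    (ρ : Matrix (Fin d₁ × Fin d₂) (Fin d₁ × Fin d₂) ℂ)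
    (hpsd : ρ.PosSemidef) (htr : ρ.trace = 1)
    (ρ₁ : Matrix (Fin d₁) (Fin d₁) ℂ)
    (hρ₁ : ∀ i i', ρ₁ i i' = ∑ k, ρ (i, k) (i', k))
    (ρ₂ : Matrix (Fin d₂) (Fin d₂) ℂ)
    (hρ₂ : ∀ k k', ρ₂ k k' = ∑ i, ρ (i, k) (i, k'))
    (hpure : ρ₁.IsHermitian ∧ ρ₁ * ρ₁ = ρ₁ ∧ ρ₁.rank = 1) :
    ρ = ρ₁ ⊗ₖ ρ₂ := by
  obtain ⟨hherm, hproj, hrank⟩ := hpure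
  set P : Matrix (Fin d₁ × Fin d₂) (Fin d₁ × Fin d₂) ℂ :=
    ρ₁ ⊗ₖ (1 : Matrix (Fin d₂) (Fin d₂) ℂ) with hPdef
  set B : Matrix (Fin d₁ × Fin d₂) (Fin d₁ × Fin d₂) ℂ := 1 - P with hBdef
  have hPk : P * P = P := by
    rw [hPdef, ← Matrix.mul_kronecker_mul, hproj, Matrix.one_mul]
  have hPH : Pᴴ = P := by
    ext ⟨i, k⟩ ⟨j, l⟩
    simp only [hPdef, Matrix.conjTranspose_apply, Matrix.kroneckerMap_apply, star_mul',
      hherm.apply]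
    by_cases h : k = l <;> simp [Matrix.one_apply, h, eq_comm, mul_comm]
  have hBH : Bᴴ = B := by
    rw [hBdef, Matrix.conjTranspose_sub, Matrix.conjTranspose_one, hPH]
  have hB2 : B * B = B := by
    simp only [hBdef, Matrix.mul_sub, Matrix.sub_mul, Matrix.one_mul, Matrix.mul_one, hPk]
    abel
  have htrP : (ρ * P).trace = (ρ₁ * ρ₁).trace := by
    simp only [hPdef, Matrix.trace, Matrix.diag, Matrix.mul_apply, Matrix.kroneckerMap_apply,
      Matrix.one_apply, Fintype.sum_prod_type, hρ₁, mul_ite, mul_one, mul_zero,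
      Finset.sum_ite_eq, Finset.sum_ite_eq', Finset.mem_univ, if_true]
    refine Finset.sum_congr rfl fun x _ => ?_
    refine Eq.trans Finset.sum_comm ?_
    refine Finset.sum_congr rfl fun y _ => ?_
    rw [← Finset.sum_mul]
  have htr1 : ρ.trace = ρ₁.trace := by
    simp only [Matrix.trace, Matrix.diag, Fintype.sum_prod_type, hρ₁]
  have htrB : (B * ρ * B).trace = 0 := by
    rw [Matrix.trace_mul_comm, ← Matrix.mul_assoc, hB2, Matrix.trace_mul_comm, hBdef,
      Matrix.mul_sub, Matrix.mul_one, Matrix.trace_sub, htrP, hproj, htr1, sub_self]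
  have hσ : B * ρ * B = 0 := by
    refine psd_trace_zero _ ?_ htrB
    have := hpsd.mul_mul_conjTranspose_same B
    rwa [hBH] at this
  have hsq := hpsd.posSemidef_sqrt
  have hρB : ρ * B = 0 := by
    have hC : hpsd.sqrt * B = 0 := by
      have h0 : (hpsd.sqrt * B)ᴴ * (hpsd.sqrt * B) = 0 := by
        rw [Matrix.conjTranspose_mul, hBH, hsq.isHermitian.eq, Matrix.mul_assoc,
          ← Matrix.mul_assoc hpsd.sqrt, hpsd.sqrt_mul_self, ← Matrix.mul_assoc, hσ]
      exact Matrix.conjTranspose_mul_self_eq_zero.mp h0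
    calc ρ * B = hpsd.sqrt * (hpsd.sqrt * B) := by
          rw [← Matrix.mul_assoc, hpsd.sqrt_mul_self]
      _ = 0 := by rw [hC, Matrix.mul_zero]
  have hBρ : B * ρ = 0 := by
    have := congrArg Matrix.conjTranspose hρB
    rwa [Matrix.conjTranspose_mul, hBH, hpsd.isHermitian.eq, Matrix.conjTranspose_zero] at this
  have hR : ρ * P = ρ := by
    have : ρ * (1 - P) = 0 := hρB
    rw [Matrix.mul_sub, Matrix.mul_one, sub_eq_zero] at this
    exact this.symm
  have hL : P * ρ = ρ := by
    have : (1 - P) * ρ = 0 := hBρ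
    rw [Matrix.sub_mul, Matrix.one_mul, sub_eq_zero] at this
    exact this.symm
  have hfull : P * ρ * P = ρ := by rw [hL, hR]
  have key : ∀ i k i' k', ρ (i, k) (i', k') =
      ∑ a, ∑ b, ρ₁ i a * ρ (a, k) (b, k') * ρ₁ b i' := by
    intro i k i' k'
    conv_lhs => rw [← hfull]
    simp only [hPdef, Matrix.mul_apply, Matrix.kroneckerMap_apply, Matrix.one_apply,
      Fintype.sum_prod_type, mul_ite, mul_one, mul_zero, ite_mul, zero_mul,
      Finset.sum_ite_eq, Finset.sum_ite_eq', Finset.mem_univ, if_true,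
      Finset.sum_mul, Finset.mul_sum]
    exact Finset.sum_comm.trans
      (Finset.sum_congr rfl fun a _ => Finset.sum_congr rfl fun b _ => by ring)
  have hba : ∀ a b : Fin d₁, (∑ j, ρ₁ b j * ρ₁ j a) = ρ₁ b a := fun a b => by
    rw [← Matrix.mul_apply, hproj]
  ext ⟨i, k⟩ ⟨i', k'⟩
  show ρ (i, k) (i', k') = ρ₁ i i' * ρ₂ k k'
  calc ρ (i, k) (i', k')
      = ∑ a, ∑ b, ρ₁ i a * ρ (a, k) (b, k') * ρ₁ b i' := key i k i' k'
    _ = ∑ a, ∑ b, ρ₁ i i' * ρ₁ b a * ρ (a, k) (b, k') := by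
        refine Finset.sum_congr rfl fun a _ => Finset.sum_congr rfl fun b _ => ?_
        have hm := rank_one_minor ρ₁ hrank i a b i'
        linear_combination ρ (a, k) (b, k') * hm
    _ = ∑ a, ∑ b, ∑ j, ρ₁ i i' * (ρ₁ j a * ρ (a, k) (b, k') * ρ₁ b j) := by
        refine Finset.sum_congr rfl fun a _ => Finset.sum_congr rfl fun b _ => ?_
        rw [← hba a b]
        simp only [Finset.sum_mul, Finset.mul_sum]
        refine Finset.sum_congr rfl fun j _ => ?_
        ring
    _ = ∑ j, ∑ a, ∑ b, ρ₁ i i' * (ρ₁ j a * ρ (a, k) (b, k') * ρ₁ b j) :=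
        Eq.trans (Finset.sum_congr rfl fun a _ => Finset.sum_comm) Finset.sum_comm
    _ = ∑ j, ρ₁ i i' * ρ (j, k) (j, k') := by
        refine Finset.sum_congr rfl fun j _ => ?_
        rw [key j k j k', Finset.mul_sum]
        exact Finset.sum_congr rfl fun a _ => by rw [Finset.mul_sum]
    _ = ρ₁ i i' * ρ₂ k k' := by rw [hρ₂, Finset.mul_sum]
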